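/- Let G = ⟨H, t ; tkt⁻¹ = φ(k), k ∈ K⟩ be the HNN extension of a group H over the isomorphism K → φ(K) induced by φ ∈ Aut(H), with K ≤ H. For each d ∈ N_H(K), the assignment h ↦ h (for h ∈ H), t ↦ φ(d)·t·d⁻¹ extends to an automorphism φ_d of G. -/

import Mathlib

open HNNExtension

/-- The automorphism-induced HNN extension `H∗_(K,φ) = ⟨H, t ; tkt⁻¹ = φ(k), k ∈ K⟩`. -/
abbrev AutHNN (H : Type*) [Group H] (K : Subgroup H) (φ : H ≃* H) :=
  HNNExtension H K (K.map (φ : H →* H)) (φ.subgroupMap K)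

section aux

variable {H : Type*} [Group H] (K : Subgroup H) (φ : H ≃* H)

lemma varphi_rel (d : H) (hd : d ∈ (Subgroup.normalizer (K : Set H))) (a : K) :
    (of (φ d) * t * (of d)⁻¹ : AutHNN H K φ) * of (a : H) =
      of ((φ.subgroupMap K a : K.map (φ : H →* H)) : H) * (of (φ d) * t * (of d)⁻¹) := by
  have hmem : d⁻¹ * a * d ∈ K := by
    have := (Subgroup.mem_normalizer_iff.mp ((Subgroup.normalizer (K : Set H)).inv_mem hd)) (a : H) |>.mp a.2
    simpa [mul_assoc] using this
  have key := t_mul_of (A := K) (B := K.map (φ : H →* H)) (φ := φ.subgroupMap K)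
    ⟨d⁻¹ * a * d, hmem⟩
  have hcoe : ((φ.subgroupMap K ⟨d⁻¹ * a * d, hmem⟩ : K.map (φ : H →* H)) : H)
      = φ (d⁻¹ * a * d) := rfl
  rw [hcoe] at key
  have hcoe2 : ((φ.subgroupMap K a : K.map (φ : H →* H)) : H) = φ a := rfl
  rw [hcoe2]
  calc (of (φ d) * t * (of d)⁻¹ : AutHNN H K φ) * of (a : H)
      = of (φ d) * (t * of (d⁻¹ * a * d)) * of (d : H)⁻¹ := by
        simp [mul_assoc, ← map_mul, ← map_inv]
    _ = of (φ d) * (of (φ (d⁻¹ * a * d)) * t) * of (d : H)⁻¹ := by rw [key]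
    _ = of (φ (a : H)) * (of (φ d) * t * (of d)⁻¹) := by
        have h3 : (φ d) * φ (d⁻¹ * ((a : H) * d)) = φ (a : H) * φ d := by
          rw [← map_mul, ← map_mul]; congr 1; group
        simp only [mul_assoc, ← map_inv]
        rw [← mul_assoc (of (φ d)), ← map_mul, h3, map_mul, mul_assoc]

/-- the lift homomorphism -/
noncomputable def psiHom (d : H) (hd : d ∈ (Subgroup.normalizer (K : Set H))) : AutHNN H K φ →* AutHNN H K φ :=
  lift of (of (φ d) * t * (of d)⁻¹) (varphi_rel K φ d hd)

end aux

/-- For `d ∈ N_H(K)`, the assignment `h ↦ h`, `t ↦ φ(d)·t·d⁻¹` extends to an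
automorphism of `G = H∗_(K,φ)`. -/
theorem varphi_d_is_automorphism {H : Type*} [Group H] (K : Subgroup H) (φ : H ≃* H)
    (d : H) (hd : d ∈ Subgroup.normalizer (K : Set H)) :
    ∃ ψ : AutHNN H K φ ≃* AutHNN H K φ,
      (∀ h : H, ψ (of h) = of h) ∧ ψ t = of (φ d) * t * (of d)⁻¹ := by
  have hd' : d⁻¹ ∈ (Subgroup.normalizer (K : Set H)) := (Subgroup.normalizer (K : Set H)).inv_mem hd
  let f := psiHom K φ d hd
  let g := psiHom K φ d⁻¹ hd'
  have hfg : f.comp g = MonoidHom.id _ := by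
    ext1
    · ext h; simp [f, g, psiHom]
    · simp [f, g, psiHom, mul_assoc]
  have hgf : g.comp f = MonoidHom.id _ := by
    ext1
    · ext h; simp [f, g, psiHom]
    · simp [f, g, psiHom, mul_assoc]
  refine ⟨MonoidHom.toMulEquiv f g hgf hfg, fun h => ?_, ?_⟩
  · simp [f, psiHom, MonoidHom.toMulEquiv]
  · simp [f, psiHom, MonoidHom.toMulEquiv]
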